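/- arXiv:2011.09291 — 2 statements merged into one kernel-verified Lean document; each statement's English description precedes it below -/
import Mathlib

section
/- Fix an integer n ≥ 3, masses m₁,…,mₙ > 0, and s > 1. Define the collinearity function θ(q) = max_{i≠j} arccos( |⟨(qᵢ−qⱼ)/|qᵢ−qⱼ|, e₁⟩| ) ∈ [0, π/2], where e₁ = (1,0), and the gradient vector field G(q) = M⁻¹∇U(q) − (⟨M⁻¹∇U(q), Ŝ(s)q⟩_M / ⟨Ŝ(s)q, Ŝ(s)q⟩_M)·Ŝ(s)q, where (M⁻¹∇U(q))ᵢ = mᵢ⁻¹∇_{qᵢ}U(q) (the mass-metric gradient of U restricted to the ellipsoid {I_s = 1}). Then: (i) if all qᵢ lie on the x-axis ℝ×{0} then all components of G(q) lie in ℝ×{0} (the set of configurations collinear along the x-axis is invariant under the gradient flow); and (ii) for every C¹ curve γ : (a,b) → (ℝ²)ⁿ with each γ(t) collision-free and centered with I_s(γ(t)) = 1, satisfying γ'(t) = G(γ(t)) and 0 < θ(γ(t)) ≤ π/4 for all t ∈ (a,b), the function t ↦ θ(γ(t)) is non-increasing on (a,b). -/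
open scoped BigOperators

noncomputable section

/-- A point of the plane `ℝ²`. -/
abbrev Pt : Type := EuclideanSpace ℝ (Fin 2)

/-- A planar configuration of `n` bodies. -/
abbrev Conf (n : ℕ) : Type := Fin n → Pt

/-- The Newtonian potential `U(q) = ∑_{i<j} mᵢmⱼ/|qᵢ-qⱼ|`. -/
def potU (n : ℕ) (m : Fin n → ℝ) (q : Conf n) : ℝ :=
  ∑ i : Fin n, ∑ j : Fin n, if i < j then m i * m j / ‖q i - q j‖ else 0

/-- The gradient `∇_{qᵢ}U(q)` of `U` with respect to the position of the `i`-th body. -/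
def gradU (n : ℕ) (m : Fin n → ℝ) (q : Conf n) (i : Fin n) : Pt :=
  gradient (fun x => potU n m (Function.update q i x)) (q i)

/-- The matrix `S(s) = diag(s,1)` acting on `ℝ²`. -/
def Smat (s : ℝ) (v : Pt) : Pt := WithLp.toLp 2 (fun k => if k = 0 then s * v k else v k)

/-- `Ŝ(s)` acting diagonally on configurations. -/
def Shat (n : ℕ) (s : ℝ) (v : Conf n) : Conf n := fun i => Smat s (v i)

/-- The mass inner product `⟨v,w⟩_M = ∑ᵢ mᵢ⟨vᵢ,wᵢ⟩`. -/
def mInner (n : ℕ) (m : Fin n → ℝ) (v w : Conf n) : ℝ :=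
  ∑ i, m i * (inner ℝ (v i) (w i) : ℝ)

/-- The `S`-weighted moment of inertia `I_s(q) = ⟨Ŝ(s)q, q⟩_M`. -/
def Imom (n : ℕ) (m : Fin n → ℝ) (s : ℝ) (q : Conf n) : ℝ :=
  mInner n m (Shat n s q) q

/-- `q` is collision-free. -/
def CollisionFree (n : ℕ) (q : Conf n) : Prop := ∀ i j, i ≠ j → q i ≠ q j

/-- `q` has center of mass at the origin. -/
def Centered (n : ℕ) (m : Fin n → ℝ) (q : Conf n) : Prop := (∑ i, m i • q i) = 0

/-- A normalized S-balanced configuration with parameter `s`: collision-free, centered,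
`I_s(q) = 1`, and `∇_{qᵢ}U(q) + U(q)·mᵢ·S(s)qᵢ = 0` for all `i`. -/
def IsSBC (n : ℕ) (m : Fin n → ℝ) (s : ℝ) (q : Conf n) : Prop :=
  CollisionFree n q ∧ Centered n m q ∧ Imom n m s q = 1 ∧
    ∀ i, gradU n m q i + potU n m q • (m i • Smat s (q i)) = 0

/-- A 1-CSBC: a normalized collinear central configuration on the y-axis. -/
def Is1CSBC (n : ℕ) (m : Fin n → ℝ) (q : Conf n) : Prop :=
  (∀ i, q i 0 = 0) ∧ IsSBC n m 1 q

/-- The collinearity function `θ(q) = max_{i≠j} arccos(|⟨(qᵢ-qⱼ)/|qᵢ-qⱼ|, e₁⟩|)`. -/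
def thetaFn (n : ℕ) (q : Conf n) : ℝ :=
  sSup {t : ℝ | ∃ i j : Fin n, i ≠ j ∧ t = Real.arccos (|(q i - q j) 0| / ‖q i - q j‖)}

/-- The (mass-metric) gradient vector field of `U` restricted to the ellipsoid `{I_s = 1}`:
`G(q) = M⁻¹∇U(q) - (⟨M⁻¹∇U(q), Ŝ(s)q⟩_M / ⟨Ŝ(s)q, Ŝ(s)q⟩_M)·Ŝ(s)q`. -/
def Gfield (n : ℕ) (m : Fin n → ℝ) (s : ℝ) (q : Conf n) : Conf n :=
  (fun i => (m i)⁻¹ • gradU n m q i) -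
    (mInner n m (fun i => (m i)⁻¹ • gradU n m q i) (Shat n s q) /
        mInner n m (Shat n s q) (Shat n s q)) • Shat n s q

-- ===================== auxiliary lemmas =====================

lemma le_of_sq_le_sq'' {a b : ℝ} (ha : 0 ≤ a) (hb : 0 ≤ b) (h : a^2 ≤ b^2) : a ≤ b := by
  nlinarith

lemma key_pos (x y a1 a2 b1 b2 : ℝ) (hx : 0 < x) (hy : 0 < y) (hyx : y ≤ x)
    (hA : |a2| * x ≤ y * |a1|) (hB : |b2| * x ≤ y * |b1|)
    (hu1 : a1 - b1 = x) (hu2 : a2 - b2 = y) :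
    0 ≤ (x*a2 - y*a1) * ((b1^2+b2^2) - (a1^2+a2^2)) := by
  have ha1' : a1 = b1 + x := by linarith
  have ha2' : a2 = b2 + y := by linarith
  have hWeq : x*a2 - y*a1 = x*b2 - y*b1 := by rw [ha1', ha2']; ring
  rcases le_or_gt (x*a2 - y*a1) 0 with hW | hW
  · rcases lt_or_ge b1 0 with hb1 | hb1
    · have h2 : |b1| = -b1 := abs_of_neg hb1
      have h1 : (-b2) * x ≤ |b2| * x := mul_le_mul_of_nonneg_right (neg_le_abs b2) hx.le
      have hW0 : x*a2 - y*a1 = 0 := by rw [hWeq] at hW ⊢; nlinarith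
      rw [hW0, zero_mul]
    · have h2 : |b1| = b1 := abs_of_nonneg hb1
      rw [h2] at hB
      have k1 : 0 ≤ x * (y * (b2 + |b2|)) :=
        mul_nonneg hx.le (mul_nonneg hy.le (by nlinarith [neg_le_abs b2]))
      have k2 : y * (|b2| * x) ≤ y * (y * b1) := mul_le_mul_of_nonneg_left hB hy.le
      have k3 : 0 ≤ b1 * ((x - y) * (x + y)) :=
        mul_nonneg hb1 (mul_nonneg (by linarith) (by linarith))
      have hbu : 0 ≤ x * (x*b1 + y*b2) := by nlinarith
      have hE : 0 ≤ x*b1 + y*b2 := by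
        have := le_of_mul_le_mul_left (by linarith : x * 0 ≤ x * (x*b1 + y*b2)) hx
        linarith
      have hD : (b1^2+b2^2) - (a1^2+a2^2) ≤ 0 := by rw [ha1', ha2']; nlinarith
      nlinarith [mul_nonneg (neg_nonneg.2 hW) (neg_nonneg.2 hD)]
  · rcases le_or_gt a1 0 with ha1 | ha1
    · have h2 : |a1| = -a1 := by
        rcases eq_or_lt_of_le ha1 with h | h
        · simp [← h]
        · exact abs_of_neg h
      rw [h2] at hA
      have k1 : 0 ≤ x * (y * (|a2| - a2)) :=
        mul_nonneg hx.le (mul_nonneg hy.le (by nlinarith [le_abs_self a2]))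
      have k2 : y * (|a2| * x) ≤ y * (y * -a1) := mul_le_mul_of_nonneg_left hA hy.le
      have k3 : a1 * ((x - y) * (x + y)) ≤ 0 :=
        mul_nonpos_of_nonpos_of_nonneg ha1 (mul_nonneg (by linarith) (by linarith))
      have hau : x * (x*a1 + y*a2) ≤ 0 := by nlinarith
      have hE : x*a1 + y*a2 ≤ 0 := by
        have := le_of_mul_le_mul_left (by linarith : x * (x*a1 + y*a2) ≤ x * 0) hx
        linarith
      have hD : 0 ≤ (b1^2+b2^2) - (a1^2+a2^2) := by rw [ha1', ha2']; nlinarith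
      exact mul_nonneg hW.le hD
    · exfalso
      have h2 : |a1| = a1 := abs_of_pos ha1
      have h1 : a2 * x ≤ |a2| * x := mul_le_mul_of_nonneg_right (le_abs_self a2) hx.le
      nlinarith

lemma key_gen (x y a1 a2 b1 b2 : ℝ) (hyx : y^2 ≤ x^2)
    (hA : a2^2 * x^2 ≤ y^2 * a1^2) (hB : b2^2 * x^2 ≤ y^2 * b1^2)
    (hu1 : a1 - b1 = x) (hu2 : a2 - b2 = y) :
    0 ≤ (x*y*(x*a2 - y*a1)) * ((b1^2+b2^2) - (a1^2+a2^2)) := by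
  rcases eq_or_ne y 0 with hy | hy
  · simp [hy]
  rcases eq_or_ne x 0 with hx | hx
  · exfalso; apply hy; nlinarith
  have hax : |a2| * |x| ≤ |y| * |a1| := by
    apply le_of_sq_le_sq'' (by positivity) (by positivity)
    rw [mul_pow, mul_pow, sq_abs, sq_abs, sq_abs, sq_abs]; exact hA
  have hbx : |b2| * |x| ≤ |y| * |b1| := by
    apply le_of_sq_le_sq'' (by positivity) (by positivity)
    rw [mul_pow, mul_pow, sq_abs, sq_abs, sq_abs, sq_abs]; exact hB
  have hyx' : |y| ≤ |x| := by
    apply le_of_sq_le_sq'' (abs_nonneg _) (abs_nonneg _)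
    rw [sq_abs, sq_abs]; exact hyx
  rcases lt_or_gt_of_ne hx with hx' | hx' <;> rcases lt_or_gt_of_ne hy with hy' | hy'
  · have h := key_pos (-x) (-y) (-a1) (-a2) (-b1) (-b2) (by linarith) (by linarith)
      (by rw [abs_of_neg hx', abs_of_neg hy'] at hyx'; linarith)
      (by simpa [abs_neg, abs_of_neg hx', abs_of_neg hy'] using hax)
      (by simpa [abs_neg, abs_of_neg hx', abs_of_neg hy'] using hbx)
      (by linarith) (by linarith)
    nlinarith [mul_nonneg (mul_pos_of_neg_of_neg hx' hy').le h]
  · have h := key_pos (-x) y (-a1) a2 (-b1) b2 (by linarith) hy'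
      (by rw [abs_of_neg hx', abs_of_pos hy'] at hyx'; linarith)
      (by simpa [abs_neg, abs_of_neg hx', abs_of_pos hy'] using hax)
      (by simpa [abs_neg, abs_of_neg hx', abs_of_pos hy'] using hbx)
      (by linarith) (by linarith)
    nlinarith [mul_nonneg (mul_pos (neg_pos.2 hx') hy').le h]
  · have h := key_pos x (-y) a1 (-a2) b1 (-b2) hx' (by linarith)
      (by rw [abs_of_pos hx', abs_of_neg hy'] at hyx'; linarith)
      (by simpa [abs_neg, abs_of_pos hx', abs_of_neg hy'] using hax)
      (by simpa [abs_neg, abs_of_pos hx', abs_of_neg hy'] using hbx)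
      (by linarith) (by linarith)
    nlinarith [mul_nonneg (mul_pos hx' (neg_pos.2 hy')).le h]
  · have h := key_pos x y a1 a2 b1 b2 hx' hy'
      (by rw [abs_of_pos hx', abs_of_pos hy'] at hyx'; linarith)
      (by simpa [abs_of_pos hx', abs_of_pos hy'] using hax)
      (by simpa [abs_of_pos hx', abs_of_pos hy'] using hbx)
      hu1 hu2
    nlinarith [mul_nonneg (mul_pos hx' hy').le h]

lemma hasFDerivAt_inv_norm_sub {F : Type*} [NormedAddCommGroup F] [InnerProductSpace ℝ F]
    (c x : F) (h : x ≠ c) :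
    HasFDerivAt (fun y => ‖y - c‖⁻¹) ((-(‖x - c‖^3)⁻¹) • (innerSL ℝ (x - c))) x := by
  have hr : (0:ℝ) < ‖x - c‖ := by
    rw [norm_pos_iff, sub_ne_zero]; exact h
  have h1 : HasFDerivAt (fun y : F => ‖y - c‖^2) (2 • (innerSL ℝ (x - c))) x := by
    have := ((hasFDerivAt_id x).sub_const c).norm_sq
    simpa using this
  have h2 : HasDerivAt Real.sqrt (1/(2 * Real.sqrt (‖x - c‖^2))) (‖x - c‖^2) :=
    Real.hasDerivAt_sqrt (by positivity)
  have h3 : HasFDerivAt (fun y : F => Real.sqrt (‖y - c‖^2))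
      ((1/(2 * Real.sqrt (‖x - c‖^2))) • (2 • (innerSL ℝ (x - c)))) x :=
    h2.comp_hasFDerivAt x h1
  have h4 : HasFDerivAt (fun y : F => ‖y - c‖)
      ((1/(2 * Real.sqrt (‖x - c‖^2))) • (2 • (innerSL ℝ (x - c)))) x := by
    convert h3 using 2 with y
    rw [Real.sqrt_sq (norm_nonneg _)]
  have h5 : HasDerivAt (fun t : ℝ => t⁻¹) (-(‖x - c‖^2)⁻¹) ‖x - c‖ := by
    simpa using hasDerivAt_inv (ne_of_gt hr)
  have h6 := h5.comp_hasFDerivAt x h4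
  refine h6.congr_fderiv ?_
  rw [Real.sqrt_sq (norm_nonneg _)]
  ext v
  simp only [ContinuousLinearMap.smul_apply, ContinuousLinearMap.coe_smul', Pi.smul_apply,
    smul_eq_mul]
  field_simp
  ring

lemma pair_reindex {M : Type*} [AddCommMonoid M] {n : ℕ} (i : Fin n) (w : Fin n → M) :
    (∑ a : Fin n, ∑ b : Fin n,
        (if a < b then (if a = i then w b else if b = i then w a else 0) else 0))
      = ∑ k : Fin n, if k = i then 0 else w k := by
  have h1 : ∀ a : Fin n,
      (∑ b : Fin n, (if a < b then (if a = i then w b else if b = i then w a else 0) else 0))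
        = (if a = i then (∑ b, if i < b then w b else 0) else 0) + (if a < i then w a else 0) := by
    intro a
    by_cases ha : a = i
    · subst ha
      simp [lt_irrefl]
    · rw [if_neg ha]
      have key : ∀ b : Fin n,
          (if a < b then (if a = i then w b else if b = i then w a else 0) else 0)
            = if b = i then (if a < i then w a else 0) else 0 := by
        intro b
        by_cases hb : b = i
        · subst hb; simp [ha]
        · simp [ha, hb]
      rw [Finset.sum_congr rfl (fun b _ => key b), Finset.sum_ite_eq' Finset.univ i]
      simp
  rw [Finset.sum_congr rfl (fun a _ => h1 a), Finset.sum_add_distrib,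
    Finset.sum_ite_eq' Finset.univ i]
  simp only [Finset.mem_univ, if_true]
  rw [← Finset.sum_add_distrib]
  apply Finset.sum_congr rfl
  intro k _
  rcases lt_trichotomy k i with h | h | h
  · simp [h, ne_of_lt h, not_lt.2 h.le]
  · subst h; simp [lt_irrefl]
  · simp [h, (ne_of_lt h).symm, not_lt.2 h.le]

lemma gradU_eq {n : ℕ} (m : Fin n → ℝ) (q : Conf n) (hcf : CollisionFree n q) (i : Fin n) :
    gradU n m q i
      = ∑ k : Fin n, if k = i then (0:Pt)
          else (-(m i * m k * (‖q i - q k‖^3)⁻¹)) • (q i - q k) := by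
  classical
  set w : Fin n → Pt := fun k => (-(m i * m k * (‖q i - q k‖^3)⁻¹)) • (q i - q k) with hw
  set W : Fin n → (Pt →L[ℝ] ℝ) :=
    fun k => (-(m i * m k * (‖q i - q k‖^3)⁻¹)) • (innerSL ℝ (q i - q k)) with hWdef
  have hne : ∀ k, k ≠ i → q i ≠ q k := fun k hk => hcf i k (Ne.symm hk)
  have hterm : ∀ a b : Fin n,
      HasFDerivAt (fun x : Pt =>
        if a < b then m a * m b / ‖Function.update q i x a - Function.update q i x b‖ else 0)
        (if a < b then (if a = i then W b else if b = i then W a else 0) else 0) (q i) := by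
    intro a b
    by_cases hab : a < b
    · by_cases ha : a = i
      · subst ha
        have hbne : b ≠ a := (ne_of_gt hab)
        have : (fun x : Pt =>
            if a < b then m a * m b / ‖Function.update q a x a - Function.update q a x b‖ else 0)
            = fun x : Pt => (m a * m b) * ‖x - q b‖⁻¹ := by
          funext x
          rw [if_pos hab, Function.update_self, Function.update_of_ne hbne, div_eq_mul_inv]
        rw [this]
        rw [if_pos hab, if_pos rfl]
        have h0 := (hasFDerivAt_inv_norm_sub (q b) (q a) (hne b hbne)).const_mul (m a * m b)
        refine h0.congr_fderiv ?_
        rw [hWdef, smul_smul]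
        congr 1
        ring_nf
      · by_cases hb : b = i
        · subst hb
          have hane : a ≠ b := ne_of_lt hab
          have : (fun x : Pt =>
              if a < b then m a * m b / ‖Function.update q b x a - Function.update q b x b‖ else 0)
              = fun x : Pt => (m a * m b) * ‖x - q a‖⁻¹ := by
            funext x
            rw [if_pos hab, Function.update_self, Function.update_of_ne hane, div_eq_mul_inv,
              norm_sub_rev]
          rw [this]
          rw [if_pos hab, if_neg ha, if_pos rfl]
          have h0 := (hasFDerivAt_inv_norm_sub (q a) (q b) (hne a ha)).const_mul (m a * m b)
          refine h0.congr_fderiv ?_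
          rw [hWdef, smul_smul]
          congr 1
          ring_nf
        · have : (fun x : Pt =>
              if a < b then m a * m b / ‖Function.update q i x a - Function.update q i x b‖ else 0)
              = fun _ : Pt => m a * m b / ‖q a - q b‖ := by
            funext x
            rw [if_pos hab, Function.update_of_ne ha, Function.update_of_ne hb]
          rw [this]
          simp only [if_pos hab, if_neg ha, if_neg hb]
          exact hasFDerivAt_const _ _
    · have : (fun x : Pt =>
          if a < b then m a * m b / ‖Function.update q i x a - Function.update q i x b‖ else 0)
          = fun _ : Pt => (0:ℝ) := by
        funext x; rw [if_neg hab]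
      rw [this]
      simp only [if_neg hab]
      exact hasFDerivAt_const _ _
  have hsum : HasFDerivAt (fun x => potU n m (Function.update q i x))
      (∑ a : Fin n, ∑ b : Fin n,
        (if a < b then (if a = i then W b else if b = i then W a else 0) else 0)) (q i) := by
    have heq : (fun x : Pt => potU n m (Function.update q i x))
        = fun x : Pt => ∑ a : Fin n, ∑ b : Fin n,
            (if a < b then m a * m b / ‖Function.update q i x a - Function.update q i x b‖
             else 0) := rfl
    rw [heq]
    exact HasFDerivAt.fun_sum fun a _ => HasFDerivAt.fun_sum fun b _ => hterm a b
  have hDsum : (∑ a : Fin n, ∑ b : Fin n,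
      (if a < b then (if a = i then W b else if b = i then W a else 0) else 0))
      = ∑ k : Fin n, if k = i then 0 else W k := pair_reindex i W
  have htd : (∑ k : Fin n, if k = i then 0 else W k)
      = (InnerProductSpace.toDual ℝ Pt) (∑ k : Fin n, if k = i then (0:Pt) else w k) := by
    rw [map_sum]
    apply Finset.sum_congr rfl
    intro k _
    by_cases hk : k = i
    · simp [hk]
    · rw [if_neg hk, if_neg hk, hWdef, hw]
      ext v
      simp [InnerProductSpace.toDual_apply_apply, inner_smul_left]
  rw [hDsum, htd] at hsum
  show gradient (fun x => potU n m (Function.update q i x)) (q i) = _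
  unfold gradient
  rw [hsum.fderiv, LinearIsometryEquiv.symm_apply_apply]

lemma pt_inner (v w : Pt) : (inner ℝ v w : ℝ) = v 0 * w 0 + v 1 * w 1 := by
  simp [PiLp.inner_apply, RCLike.inner_apply, Fin.sum_univ_two]
  ring

lemma pt_sub_apply (v w : Pt) (k : Fin 2) : (v - w) k = v k - w k := rfl

lemma pt_smul_apply (c : ℝ) (v : Pt) (k : Fin 2) : (c • v) k = c * v k := rfl

lemma pt_sum_apply {α : Type*} (s : Finset α) (f : α → Pt) (k : Fin 2) :
    (∑ a ∈ s, f a) k = ∑ a ∈ s, f a k := by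
  induction s using Finset.cons_induction with
  | empty => rfl
  | cons a s ha ih => rw [Finset.sum_cons, Finset.sum_cons, ← ih]; rfl

lemma pt_norm_sq (v : Pt) : ‖v‖^2 = (v 0)^2 + (v 1)^2 := by
  rw [EuclideanSpace.norm_eq, Real.sq_sqrt (by positivity)]
  simp [Fin.sum_univ_two, Real.norm_eq_abs, sq_abs]

lemma smat_zero (s : ℝ) (v : Pt) : Smat s v 0 = s * v 0 := by simp [Smat]

lemma smat_one (s : ℝ) (v : Pt) : Smat s v 1 = v 1 := by
  simp [Smat, Fin.one_eq_zero_iff]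

lemma smat_sub (s : ℝ) (v w : Pt) : Smat s (v - w) = Smat s v - Smat s w := by
  ext k
  rcases Fin.exists_fin_two.mp ⟨k, rfl⟩ with h | h <;>
    · subst h
      simp [pt_sub_apply, smat_zero, smat_one, Smat, mul_sub]

lemma inner_smat_self (s : ℝ) (v : Pt) :
    (inner ℝ v (Smat s v) : ℝ) = s * (v 0)^2 + (v 1)^2 := by
  rw [pt_inner, smat_zero, smat_one]; ring

lemma lam_num_nonpos {n : ℕ} (m : Fin n → ℝ) (hm : ∀ i, 0 < m i) (s : ℝ) (hs : 0 < s)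
    (q : Conf n) (hcf : CollisionFree n q) :
    mInner n m (fun i => (m i)⁻¹ • gradU n m q i) (Shat n s q) ≤ 0 := by
  classical
  set G : Fin n → Fin n → ℝ := fun i k =>
    if k = i then 0 else
      (m i * m k * (‖q i - q k‖^3)⁻¹) * (inner ℝ (q i - q k) (Smat s (q i)) : ℝ) with hG
  have hmain : mInner n m (fun i => (m i)⁻¹ • gradU n m q i) (Shat n s q)
      = -∑ i, ∑ k, G i k := by
    rw [mInner, ← Finset.sum_neg_distrib]
    apply Finset.sum_congr rfl
    intro i _
    rw [gradU_eq m q hcf i]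
    have : (inner ℝ ((m i)⁻¹ • (∑ k : Fin n, if k = i then (0:Pt)
        else (-(m i * m k * (‖q i - q k‖^3)⁻¹)) • (q i - q k))) (Shat n s q i) : ℝ)
        = (m i)⁻¹ * ∑ k, (- G i k) := by
      rw [real_inner_smul_left, sum_inner]
      congr 1
      apply Finset.sum_congr rfl
      intro k _
      by_cases hk : k = i
      · simp [hk, hG]
      · rw [if_neg hk, hG]
        simp only [if_neg hk]
        rw [real_inner_smul_left]
        show _ = -( _ * _)
        ring_nf
        rfl
    rw [this, ← mul_assoc, mul_inv_cancel₀ (ne_of_gt (hm i)), one_mul,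
      ← Finset.sum_neg_distrib]
  rw [hmain, neg_nonpos]
  have hsymm : (∑ i, ∑ k, G i k) = ∑ i, ∑ k, G k i := Finset.sum_comm
  have h2N : (2:ℝ) * (∑ i, ∑ k, G i k) = ∑ i, ∑ k, (G i k + G k i) := by
    rw [two_mul]
    nth_rewrite 2 [hsymm]
    rw [← Finset.sum_add_distrib]
    apply Finset.sum_congr rfl
    intro i _
    rw [← Finset.sum_add_distrib]
  have hterm : ∀ i k, 0 ≤ G i k + G k i := by
    intro i k
    by_cases hk : k = i
    · simp [hk, hG]
    · rw [hG]
      simp only [if_neg hk, if_neg (Ne.symm hk)]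
      have hsym1 : ‖q k - q i‖ = ‖q i - q k‖ := norm_sub_rev _ _
      have hc : (0:ℝ) ≤ m i * m k * (‖q i - q k‖^3)⁻¹ := by
        have := (hm i).le; have := (hm k).le; positivity
      have hinner : (inner ℝ (q i - q k) (Smat s (q i)) : ℝ)
          + (inner ℝ (q k - q i) (Smat s (q k)) : ℝ)
          = (inner ℝ (q i - q k) (Smat s (q i - q k)) : ℝ) := by
        rw [smat_sub, inner_sub_right]
        have : (q k - q i : Pt) = -(q i - q k) := by abel
        rw [this, inner_neg_left]
        ring
      rw [hsym1, mul_comm (m k) (m i)]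
      calc (0:ℝ) ≤ (m i * m k * (‖q i - q k‖^3)⁻¹)
            * (inner ℝ (q i - q k) (Smat s (q i - q k)) : ℝ) := by
              apply mul_nonneg hc
              rw [inner_smat_self]
              nlinarith [sq_nonneg ((q i - q k) 1), sq_nonneg ((q i - q k) 0)]
        _ = _ := by rw [← hinner]; ring
  have : (0:ℝ) ≤ 2 * (∑ i, ∑ k, G i k) := by
    rw [h2N]
    exact Finset.sum_nonneg fun i _ => Finset.sum_nonneg fun k _ => hterm i k
  linarith

lemma lam_nonpos {n : ℕ} (m : Fin n → ℝ) (hm : ∀ i, 0 < m i) (s : ℝ) (hs : 0 < s)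
    (q : Conf n) (hcf : CollisionFree n q) :
    mInner n m (fun i => (m i)⁻¹ • gradU n m q i) (Shat n s q) /
        mInner n m (Shat n s q) (Shat n s q) ≤ 0 := by
  apply div_nonpos_of_nonpos_of_nonneg (lam_num_nonpos m hm s hs q hcf)
  apply Finset.sum_nonneg
  intro i _
  exact mul_nonneg (hm i).le real_inner_self_nonneg

lemma part_one {n : ℕ} (m : Fin n → ℝ) (s : ℝ)
    (q : Conf n) (hcf : CollisionFree n q) (hq : ∀ i, q i 1 = 0) (i : Fin n) :
    Gfield n m s q i 1 = 0 := by
  have hgrad : gradU n m q i 1 = 0 := by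
    rw [gradU_eq m q hcf i, pt_sum_apply]
    apply Finset.sum_eq_zero
    intro k _
    by_cases hk : k = i
    · simp [hk]
    · rw [if_neg hk, pt_smul_apply, pt_sub_apply, hq, hq, sub_zero, mul_zero]
  set lam := mInner n m (fun i => (m i)⁻¹ • gradU n m q i) (Shat n s q) /
      mInner n m (Shat n s q) (Shat n s q) with hlam
  show ((m i)⁻¹ • gradU n m q i - lam • Smat s (q i)) 1 = 0
  rw [pt_sub_apply, pt_smul_apply, pt_smul_apply, hgrad, smat_one, hq, mul_zero, mul_zero,
    sub_zero]

lemma max_antitone {ι : Type*} [Fintype ι] [Nonempty ι] {f f' : ι → ℝ → ℝ} {a b : ℝ}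
    (hd : ∀ p, ∀ t ∈ Set.Ioo a b, HasDerivAt (f p) (f' p t) t)
    (h0 : ∀ t ∈ Set.Ioo a b, ∀ p, (∀ r, f r t ≤ f p t) → f' p t ≤ 0)
    {t₁ t₂ : ℝ} (h₁ : t₁ ∈ Set.Ioo a b) (h₂ : t₂ ∈ Set.Ioo a b) (h12 : t₁ ≤ t₂) :
    (Finset.univ.sup' Finset.univ_nonempty fun p => f p t₂)
      ≤ Finset.univ.sup' Finset.univ_nonempty fun p => f p t₁ := by
  set F : ℝ → ℝ := fun t => Finset.univ.sup' Finset.univ_nonempty fun p => f p t with hF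
  have hsub : Set.Icc t₁ t₂ ⊆ Set.Ioo a b := fun x hx =>
    ⟨lt_of_lt_of_le h₁.1 hx.1, lt_of_le_of_lt hx.2 h₂.2⟩
  have hFc : ContinuousOn F (Set.Icc t₁ t₂) := by
    intro x hx
    apply ContinuousAt.continuousWithinAt
    exact ContinuousAt.finset_sup'_apply _ fun p _ => (hd p x (hsub hx)).continuousAt
  have bound : ∀ x ∈ Set.Ico t₁ t₂, ∀ r : ℝ, (0:ℝ) < r →
      ∃ᶠ z in nhdsWithin x (Set.Ioi x), slope F x z < r := by
    intro x hx r hr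
    apply Filter.Eventually.frequently
    have hxa : x ∈ Set.Ioo a b := hsub ⟨hx.1, hx.2.le⟩
    have hev : ∀ p : ι, ∀ᶠ z in nhdsWithin x (Set.Ioi x), f p z - F x < r * (z - x) := by
      intro p
      by_cases hp : f p x = F x
      · have hsl : Filter.Tendsto (slope (f p) x) (nhdsWithin x {x}ᶜ) (nhds (f' p x)) :=
          hasDerivAt_iff_tendsto_slope.mp (hd p x hxa)
        have hle : f' p x ≤ 0 := by
          apply h0 x hxa p
          intro r'
          rw [hp]
          exact Finset.le_sup' (fun p => f p x) (Finset.mem_univ r')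
        have hev1 : ∀ᶠ z in nhdsWithin x {x}ᶜ, slope (f p) x z < r :=
          hsl.eventually_lt_const (lt_of_le_of_lt hle hr)
        have hev2 : ∀ᶠ z in nhdsWithin x (Set.Ioi x), slope (f p) x z < r :=
          hev1.filter_mono (nhdsWithin_mono x fun z hz => ne_of_gt hz)
        filter_upwards [hev2, self_mem_nhdsWithin] with z hz hzx
        have hzx' : (0:ℝ) < z - x := sub_pos.2 hzx
        rw [slope_def_field, div_lt_iff₀ hzx'] at hz
        rw [hp] at hz
        linarith
      · have hlt : f p x < F x :=
          lt_of_le_of_ne (Finset.le_sup' (fun p => f p x) (Finset.mem_univ p)) hp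
        have hc : Filter.Tendsto (f p) (nhds x) (nhds (f p x)) :=
          (hd p x hxa).continuousAt
        have hev1 : ∀ᶠ z in nhds x, f p z < F x := hc.eventually_lt_const hlt
        have hev2 : ∀ᶠ z in nhdsWithin x (Set.Ioi x), f p z < F x :=
          hev1.filter_mono nhdsWithin_le_nhds
        filter_upwards [hev2, self_mem_nhdsWithin] with z hz hzx
        have hzx' : (0:ℝ) < z - x := sub_pos.2 hzx
        nlinarith
    filter_upwards [Filter.eventually_all.2 hev, self_mem_nhdsWithin] with z hz hzx
    have hzx' : (0:ℝ) < z - x := sub_pos.2 hzx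
    rw [slope_def_field, div_lt_iff₀ hzx']
    have : F z < F x + r * (z - x) := by
      apply (Finset.sup'_lt_iff _).2
      intro p _
      have := hz p
      linarith
    linarith
  have key := image_le_of_liminf_slope_right_le_deriv_boundary (f := F) (a := t₁) (b := t₂)
    hFc (B := fun _ => F t₁) (B' := fun _ => 0) le_rfl continuousOn_const
    (fun x _ => hasDerivWithinAt_const x _ (F t₁))
    (fun x hx r hr => bound x hx r hr)
  exact key (Set.right_mem_Icc.2 h12)

lemma inv_cube_transfer (a b : Pt) (ha : a ≠ 0) (hb : b ≠ 0) (E : ℝ)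
    (h : 0 ≤ E * (((b 0)^2 + (b 1)^2) - ((a 0)^2 + (a 1)^2))) :
    0 ≤ E * ((‖a‖^3)⁻¹ - (‖b‖^3)⁻¹) := by
  have ha2 : ‖a‖^2 = (a 0)^2 + (a 1)^2 := pt_norm_sq a
  have hb2 : ‖b‖^2 = (b 0)^2 + (b 1)^2 := pt_norm_sq b
  have hA : (0:ℝ) < ‖a‖ := norm_pos_iff.2 ha
  have hB : (0:ℝ) < ‖b‖ := norm_pos_iff.2 hb
  rcases lt_trichotomy ‖a‖ ‖b‖ with hab | hab | hab
  · have h2 : 0 < ((b 0)^2 + (b 1)^2) - ((a 0)^2 + (a 1)^2) := by nlinarith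
    have hE : 0 ≤ E := by nlinarith
    have h3 : (‖b‖^3)⁻¹ ≤ (‖a‖^3)⁻¹ := by
      apply inv_anti₀ (by positivity)
      nlinarith
    exact mul_nonneg hE (by linarith)
  · rw [hab]
    simp
  · have h2 : ((b 0)^2 + (b 1)^2) - ((a 0)^2 + (a 1)^2) < 0 := by nlinarith
    have hE : E ≤ 0 := by nlinarith
    have h3 : (‖a‖^3)⁻¹ ≤ (‖b‖^3)⁻¹ := by
      apply inv_anti₀ (by positivity)
      nlinarith
    nlinarith [mul_nonneg (neg_nonneg.2 hE)
      (neg_nonneg.2 (by linarith : (‖a‖^3)⁻¹ - (‖b‖^3)⁻¹ ≤ 0))]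

lemma hasDerivAt_coord {n : ℕ} {γ : ℝ → Conf n} {g : Conf n} {t : ℝ}
    (h : HasDerivAt γ g t) (i j : Fin n) (l : Fin 2) :
    HasDerivAt (fun t => (γ t i - γ t j) l) ((g i - g j) l) t := by
  set L : Conf n →L[ℝ] ℝ := (EuclideanSpace.proj l).comp
    ((ContinuousLinearMap.proj (R := ℝ) (φ := fun _ : Fin n => Pt) i)
      - (ContinuousLinearMap.proj (R := ℝ) (φ := fun _ : Fin n => Pt) j)) with hL
  exact L.hasFDerivAt.comp_hasDerivAt t h

lemma core_ineq {n : ℕ} (m : Fin n → ℝ) (hm : ∀ i, 0 < m i) (s : ℝ) (hs : 1 < s)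
    (q : Conf n) (hcf : CollisionFree n q)
    (i j : Fin n) (hij : i ≠ j)
    (hdom : ∀ k l : Fin n, k ≠ l →
      ((q k - q l) 1)^2 * ((q i - q j) 0)^2 ≤ ((q i - q j) 1)^2 * ((q k - q l) 0)^2)
    (hyx : ((q i - q j) 1)^2 ≤ ((q i - q j) 0)^2) :
    ((q i - q j) 0) * ((q i - q j) 1) *
      (((q i - q j) 0) * ((Gfield n m s q i - Gfield n m s q j) 1)
        - ((q i - q j) 1) * ((Gfield n m s q i - Gfield n m s q j) 0)) ≤ 0 := by
  classical
  set X : ℝ := (q i - q j) 0 with hX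
  set Y : ℝ := (q i - q j) 1 with hY
  set lam := mInner n m (fun i => (m i)⁻¹ • gradU n m q i) (Shat n s q) /
      mInner n m (Shat n s q) (Shat n s q) with hlam
  set hvec : Fin n → Fin n → Pt := fun o k =>
    if k = o then 0 else (-(m k * (‖q o - q k‖^3)⁻¹)) • (q o - q k) with hhvec
  have hFi : ∀ o : Fin n, (m o)⁻¹ • gradU n m q o = ∑ k, hvec o k := by
    intro o
    rw [gradU_eq m q hcf o, Finset.smul_sum]
    apply Finset.sum_congr rfl
    intro k _
    by_cases hk : k = o
    · simp [hk, hhvec]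
    · rw [hhvec]
      simp only [if_neg hk]
      rw [smul_smul]
      have hmo : m o ≠ 0 := (hm o).ne'
      rw [show (m o)⁻¹ * (-(m o * m k * (‖q o - q k‖^3)⁻¹))
          = -(((m o)⁻¹ * m o) * (m k * (‖q o - q k‖^3)⁻¹)) from by ring,
        inv_mul_cancel₀ hmo, one_mul]
  have hGl : ∀ (o : Fin n) (l : Fin 2),
      (Gfield n m s q o) l = (∑ k, (hvec o k) l) - lam * (Smat s (q o)) l := by
    intro o l
    show ((m o)⁻¹ • gradU n m q o - lam • Smat s (q o)) l = _
    rw [pt_sub_apply, hFi o, pt_sum_apply, pt_smul_apply]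
  have hcomp : ∀ l : Fin 2, (Gfield n m s q i - Gfield n m s q j) l
      = (∑ k, ((hvec i k) l - (hvec j k) l))
        - lam * ((Smat s (q i)) l - (Smat s (q j)) l) := by
    intro l
    rw [pt_sub_apply, hGl i l, hGl j l, Finset.sum_sub_distrib]
    ring
  -- per-k cross terms
  have hker : ∀ k : Fin n,
      X * Y * (X * ((hvec i k) 1 - (hvec j k) 1) - Y * ((hvec i k) 0 - (hvec j k) 0)) ≤ 0 := by
    intro k
    by_cases hki : k = i
    · subst hki
      have hkj : k ≠ j := hij
      rw [hhvec]
      simp only [if_pos rfl, if_neg hkj]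
      rw [pt_smul_apply, pt_smul_apply]
      have h0 : (q j - q k : Pt) 0 = -X := by rw [pt_sub_apply, hX, pt_sub_apply]; ring
      have h1 : (q j - q k : Pt) 1 = -Y := by rw [pt_sub_apply, hY, pt_sub_apply]; ring
      rw [h0, h1]
      show X * Y * (X * ((0:Pt) 1 - _) - Y * ((0:Pt) 0 - _)) ≤ 0
      norm_num
      ring_nf
      rfl
    · by_cases hkj : k = j
      · subst hkj
        have hki' : k ≠ i := fun h => hij h.symm
        rw [hhvec]
        simp only [if_pos rfl, if_neg hki']
        rw [pt_smul_apply, pt_smul_apply]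
        show X * Y * (X * (_ - (0:Pt) 1) - Y * (_ - (0:Pt) 0)) ≤ 0
        have hz : ((0:Pt) 0 = 0) ∧ ((0:Pt) 1 = 0) := ⟨rfl, rfl⟩
        rw [hz.1, hz.2]
        have e0 : (q i - q k : Pt) 0 = X := by rw [hX]
        have e1 : (q i - q k : Pt) 1 = Y := by rw [hY]
        rw [e0, e1]
        ring_nf
        rfl
      · -- main case
        set av : Pt := q i - q k with hav
        set bv : Pt := q j - q k with hbv
        have hane : av ≠ 0 := sub_ne_zero.2 (hcf i k (fun h => hki h.symm))
        have hbne : bv ≠ 0 := sub_ne_zero.2 (hcf j k (fun h => hkj h.symm))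
        have ha0 : av 0 - bv 0 = X := by
          rw [hav, hbv, pt_sub_apply, pt_sub_apply, hX, pt_sub_apply]; ring
        have ha1 : av 1 - bv 1 = Y := by
          rw [hav, hbv, pt_sub_apply, pt_sub_apply, hY, pt_sub_apply]; ring
        have hA := hdom i k (fun h => hki h.symm)
        have hB := hdom j k (fun h => hkj h.symm)
        have hkg := key_gen X Y (av 0) (av 1) (bv 0) (bv 1) hyx
          (by rw [hav]; exact hA) (by rw [hbv]; exact hB) ha0 ha1
        have htr := inv_cube_transfer av bv hane hbne (X*Y*(X*(av 1) - Y*(av 0))) hkg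
        rw [hhvec]
        simp only [if_neg hki, if_neg hkj]
        rw [pt_smul_apply, pt_smul_apply, pt_smul_apply, pt_smul_apply]
        have hW : X * (bv 1) - Y * (bv 0) = X * (av 1) - Y * (av 0) := by
          linear_combination (- X) * ha1 + Y * ha0
        have expand : X * Y * (X * (-(m k * (‖q i - q k‖ ^ 3)⁻¹) * (q i - q k) 1
              - -(m k * (‖q j - q k‖ ^ 3)⁻¹) * (q j - q k) 1)
            - Y * (-(m k * (‖q i - q k‖ ^ 3)⁻¹) * (q i - q k) 0
              - -(m k * (‖q j - q k‖ ^ 3)⁻¹) * (q j - q k) 0))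
            = - (m k * ((X*Y*(X*(av 1) - Y*(av 0))) * ((‖av‖^3)⁻¹ - (‖bv‖^3)⁻¹))) := by
          rw [hav, hbv] at hW ⊢
          linear_combination (X * Y * m k * (‖q j - q k‖^3)⁻¹) * hW
        rw [expand]
        rw [neg_nonpos]
        exact mul_nonneg (hm k).le htr
  -- assemble
  have hlam0 : lam ≤ 0 := lam_nonpos m hm s (by linarith) q hcf
  have hsm0 : (Smat s (q i)) 0 - (Smat s (q j)) 0 = s * X := by
    rw [smat_zero, smat_zero, hX, pt_sub_apply]; ring
  have hsm1 : (Smat s (q i)) 1 - (Smat s (q j)) 1 = Y := by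
    rw [smat_one, smat_one, hY, pt_sub_apply]
  have hmain : X * Y * (X * ((Gfield n m s q i - Gfield n m s q j) 1)
        - Y * ((Gfield n m s q i - Gfield n m s q j) 0))
      = (∑ k, X * Y * (X * ((hvec i k) 1 - (hvec j k) 1) - Y * ((hvec i k) 0 - (hvec j k) 0)))
        + lam * (s - 1) * (X^2 * Y^2) := by
    rw [hcomp 0, hcomp 1]
    rw [show ((Smat s (q i)) 0 - (Smat s (q j)) 0) = s * X from hsm0,
      show ((Smat s (q i)) 1 - (Smat s (q j)) 1) = Y from hsm1]
    have hsum1 : (∑ k, X * Y * (X * ((hvec i k) 1 - (hvec j k) 1)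
          - Y * ((hvec i k) 0 - (hvec j k) 0)))
        = X * Y * (X * (∑ k, ((hvec i k) 1 - (hvec j k) 1))
            - Y * (∑ k, ((hvec i k) 0 - (hvec j k) 0))) := by
      symm
      rw [Finset.mul_sum, Finset.mul_sum, ← Finset.sum_sub_distrib, Finset.mul_sum]
    rw [hsum1]
    ring
  rw [hmain]
  have h1 : (∑ k, X * Y * (X * ((hvec i k) 1 - (hvec j k) 1)
      - Y * ((hvec i k) 0 - (hvec j k) 0))) ≤ 0 :=
    Finset.sum_nonpos fun k _ => hker k
  have h2 : lam * (s - 1) * (X^2 * Y^2) ≤ 0 := by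
    apply mul_nonpos_of_nonpos_of_nonneg
    · exact mul_nonpos_of_nonpos_of_nonneg hlam0 (by linarith)
    · positivity
  linarith


lemma arccos_anti {x y : ℝ} (h : x ≤ y) : Real.arccos y ≤ Real.arccos x := by
  rw [Real.arccos_eq_pi_div_two_sub_arcsin, Real.arccos_eq_pi_div_two_sub_arcsin]
  have := Real.monotone_arcsin h
  linarith

abbrev PairIdx (n : ℕ) := {p : Fin n × Fin n // p.1 ≠ p.2}

lemma theta_set_eq {n : ℕ} (q : Conf n) :
    {t : ℝ | ∃ i j : Fin n, i ≠ j ∧ t = Real.arccos (|(q i - q j) 0| / ‖q i - q j‖)}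
      = Set.range (fun p : PairIdx n =>
          Real.arccos (|(q p.1.1 - q p.1.2) 0| / ‖q p.1.1 - q p.1.2‖)) := by
  ext t
  constructor
  · rintro ⟨i, j, hij, rfl⟩
    exact ⟨⟨(i, j), hij⟩, rfl⟩
  · rintro ⟨⟨⟨i, j⟩, hij⟩, rfl⟩
    exact ⟨i, j, hij, rfl⟩

lemma theta_le_pair {n : ℕ} (q : Conf n) {i j : Fin n} (hij : i ≠ j) :
    Real.arccos (|(q i - q j) 0| / ‖q i - q j‖) ≤ thetaFn n q := by
  have hb : BddAbove {t : ℝ | ∃ i j : Fin n, i ≠ j ∧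
      t = Real.arccos (|(q i - q j) 0| / ‖q i - q j‖)} := by
    rw [theta_set_eq]
    exact (Set.finite_range _).bddAbove
  exact le_csSup hb ⟨i, j, hij, rfl⟩

lemma theta_attained {n : ℕ} (hn : 3 ≤ n) (q : Conf n) :
    ∃ i j : Fin n, i ≠ j ∧ thetaFn n q = Real.arccos (|(q i - q j) 0| / ‖q i - q j‖) := by
  have hij : (⟨0, by omega⟩ : Fin n) ≠ ⟨1, by omega⟩ := by
    intro h
    rw [Fin.mk.injEq] at h
    omega
  have hne : {t : ℝ | ∃ i j : Fin n, i ≠ j ∧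
      t = Real.arccos (|(q i - q j) 0| / ‖q i - q j‖)}.Nonempty :=
    ⟨_, ⟨_, _, hij, rfl⟩⟩
  have hfin : {t : ℝ | ∃ i j : Fin n, i ≠ j ∧
      t = Real.arccos (|(q i - q j) 0| / ‖q i - q j‖)}.Finite := by
    rw [theta_set_eq]
    exact Set.finite_range _
  exact Set.Nonempty.csSup_mem hne hfin

lemma pair_facts {n : ℕ} (q : Conf n) (hcf : CollisionFree n q)
    (hθ : thetaFn n q ≤ Real.pi / 4) {i j : Fin n} (hij : i ≠ j) :
    ((q i - q j) 1)^2 ≤ ((q i - q j) 0)^2 ∧ (q i - q j) 0 ≠ 0 := by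
  set v : Pt := q i - q j with hv
  have hvne : v ≠ 0 := sub_ne_zero.2 (hcf i j hij)
  have hR : (0:ℝ) < ‖v‖ := norm_pos_iff.2 hvne
  have hg : Real.arccos (|v 0| / ‖v‖) ≤ Real.pi / 4 :=
    le_trans (theta_le_pair q hij) hθ
  have hc : Real.sqrt 2 / 2 ≤ |v 0| / ‖v‖ := Real.arccos_le_pi_div_four.mp hg
  have h2 : Real.sqrt 2 ^ 2 = 2 := Real.sq_sqrt (by norm_num)
  have hnorm : ‖v‖^2 = (v 0)^2 + (v 1)^2 := pt_norm_sq v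
  have hcR : Real.sqrt 2 / 2 * ‖v‖ ≤ |v 0| := (le_div_iff₀ hR).mp hc
  have hsq : (Real.sqrt 2 / 2 * ‖v‖)^2 ≤ |v 0|^2 :=
    pow_le_pow_left₀ (by positivity) hcR 2
  have hkey : (v 0)^2 + (v 1)^2 ≤ 2 * (v 0)^2 := by
    rw [mul_pow, div_pow, h2, sq_abs] at hsq
    nlinarith
  refine ⟨by nlinarith, ?_⟩
  intro h0
  rw [h0] at hkey
  nlinarith

lemma exists_y_ne {n : ℕ} (hn : 3 ≤ n) (q : Conf n) (hcf : CollisionFree n q)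
    (hθ : 0 < thetaFn n q) :
    ∃ i j : Fin n, i ≠ j ∧ (q i - q j) 1 ≠ 0 := by
  obtain ⟨i, j, hij, hth⟩ := theta_attained hn q
  refine ⟨i, j, hij, ?_⟩
  intro hY
  set v : Pt := q i - q j with hv
  have hvne : v ≠ 0 := sub_ne_zero.2 (hcf i j hij)
  have hR : (0:ℝ) < ‖v‖ := norm_pos_iff.2 hvne
  have hnorm : ‖v‖^2 = (v 0)^2 + (v 1)^2 := pt_norm_sq v
  have hveq : ‖v‖ = |v 0| := by
    have h1 : ‖v‖^2 = (v 0)^2 := by rw [hnorm, hY]; ring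
    calc ‖v‖ = Real.sqrt (‖v‖^2) := (Real.sqrt_sq (norm_nonneg v)).symm
      _ = Real.sqrt ((v 0)^2) := by rw [h1]
      _ = |v 0| := Real.sqrt_sq_eq_abs _
  have hc1 : |v 0| / ‖v‖ = 1 := by
    rw [hveq]
    exact div_self (by rw [← hveq]; exact hR.ne')
  rw [hth, hc1, Real.arccos_one] at hθ
  exact lt_irrefl 0 hθ

set_option maxHeartbeats 1000000 in
/-- The 45°-theorem for S-balanced configurations: (i) the set of configurations collinear
along the x-axis is invariant under the gradient vector field `G`; (ii) along any solution of
`γ' = G(γ)` with `0 < θ(γ) ≤ π/4`, the collinearity function `θ` is non-increasing. -/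
theorem stmt10 (n : ℕ) (hn : 3 ≤ n) (m : Fin n → ℝ) (hm : ∀ i, 0 < m i)
    (s : ℝ) (hs : 1 < s) :
    (∀ q : Conf n, CollisionFree n q → (∀ i, q i 1 = 0) → ∀ i, Gfield n m s q i 1 = 0) ∧
    (∀ (a b : ℝ) (γ : ℝ → Conf n),
      (∀ t ∈ Set.Ioo a b,
        CollisionFree n (γ t) ∧ Centered n m (γ t) ∧ Imom n m s (γ t) = 1) →
      (∀ t ∈ Set.Ioo a b, HasDerivAt γ (Gfield n m s (γ t)) t) →
      (∀ t ∈ Set.Ioo a b, 0 < thetaFn n (γ t) ∧ thetaFn n (γ t) ≤ Real.pi / 4) →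
      AntitoneOn (fun t => thetaFn n (γ t)) (Set.Ioo a b)) := by
  constructor
  · intro q hcf hq i
    exact part_one m s q hcf hq i
  · intro a b γ hconf hderiv htheta
    intro t₁ ht₁ t₂ ht₂ h12
    simp only
    haveI hPP : Nonempty (PairIdx n) := by
      refine ⟨⟨(⟨0, by omega⟩, ⟨1, by omega⟩), ?_⟩⟩
      intro h
      rw [Fin.mk.injEq] at h
      omega
    set f : PairIdx n → ℝ → ℝ := fun p t =>
      ((γ t p.1.1 - γ t p.1.2) 1)^2 / ((γ t p.1.1 - γ t p.1.2) 0)^2 with hf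
    set f' : PairIdx n → ℝ → ℝ := fun p t =>
      (2 * ((γ t p.1.1 - γ t p.1.2) 1)
          * ((Gfield n m s (γ t) p.1.1 - Gfield n m s (γ t) p.1.2) 1)
          * ((γ t p.1.1 - γ t p.1.2) 0)^2
        - ((γ t p.1.1 - γ t p.1.2) 1)^2
          * (2 * ((γ t p.1.1 - γ t p.1.2) 0)
            * ((Gfield n m s (γ t) p.1.1 - Gfield n m s (γ t) p.1.2) 0)))
      / (((γ t p.1.1 - γ t p.1.2) 0)^2)^2 with hf'
    have hd : ∀ p, ∀ t ∈ Set.Ioo a b, HasDerivAt (f p) (f' p t) t := by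
      intro p t ht
      obtain ⟨hcf, -, -⟩ := hconf t ht
      have hfacts := pair_facts (γ t) hcf (htheta t ht).2 p.2
      have hX := hasDerivAt_coord (hderiv t ht) p.1.1 p.1.2 0
      have hY := hasDerivAt_coord (hderiv t ht) p.1.1 p.1.2 1
      have hdiv := (hY.pow 2).div (hX.pow 2) (pow_ne_zero 2 hfacts.2)
      refine hdiv.congr_deriv ?_
      simp only [hf']
      norm_num
    have h0 : ∀ t ∈ Set.Ioo a b, ∀ p : PairIdx n, (∀ r, f r t ≤ f p t) → f' p t ≤ 0 := by
      intro t ht p hmax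
      obtain ⟨hcf, -, -⟩ := hconf t ht
      have hfacts : ∀ {k l : Fin n}, k ≠ l →
          ((γ t k - γ t l) 1)^2 ≤ ((γ t k - γ t l) 0)^2 ∧ (γ t k - γ t l) 0 ≠ 0 :=
        fun hkl => pair_facts (γ t) hcf (htheta t ht).2 hkl
      have hdom : ∀ k l : Fin n, k ≠ l →
          ((γ t k - γ t l) 1)^2 * ((γ t p.1.1 - γ t p.1.2) 0)^2
            ≤ ((γ t p.1.1 - γ t p.1.2) 1)^2 * ((γ t k - γ t l) 0)^2 := by
        intro k l hkl
        have h1 := hmax ⟨(k, l), hkl⟩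
        simp only [hf] at h1
        have hx1 : (0:ℝ) < ((γ t k - γ t l) 0)^2 := by
          have := (hfacts hkl).2; positivity
        have hx2 : (0:ℝ) < ((γ t p.1.1 - γ t p.1.2) 0)^2 := by
          have := (hfacts p.2).2; positivity
        exact (div_le_div_iff₀ hx1 hx2).mp h1
      have hcore := core_ineq m hm s hs (γ t) hcf p.1.1 p.1.2 p.2 hdom (hfacts p.2).1
      simp only [hf']
      apply div_nonpos_of_nonpos_of_nonneg _ (by positivity)
      nlinarith [hcore]
    have hFle := max_antitone hd h0 ht₁ ht₂ h12
    obtain ⟨i₀, j₀, hij₀, hth₀⟩ := theta_attained hn (γ t₂)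
    obtain ⟨p₁, -, hp₁⟩ :=
      Finset.exists_mem_eq_sup' Finset.univ_nonempty (fun p : PairIdx n => f p t₁)
    have hchain : f ⟨(i₀, j₀), hij₀⟩ t₂ ≤ f p₁ t₁ := by
      calc f ⟨(i₀, j₀), hij₀⟩ t₂
          ≤ Finset.univ.sup' Finset.univ_nonempty (fun p : PairIdx n => f p t₂) :=
            Finset.le_sup' (fun p : PairIdx n => f p t₂) (Finset.mem_univ ⟨(i₀, j₀), hij₀⟩)
        _ ≤ Finset.univ.sup' Finset.univ_nonempty (fun p : PairIdx n => f p t₁) := hFle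
        _ = f p₁ t₁ := hp₁
    obtain ⟨hcf₁, -, -⟩ := hconf t₁ ht₁
    obtain ⟨hcf₂, -, -⟩ := hconf t₂ ht₂
    have hfact₀ := pair_facts (γ t₂) hcf₂ (htheta t₂ ht₂).2 hij₀
    have hfact₁ := pair_facts (γ t₁) hcf₁ (htheta t₁ ht₁).2 p₁.2
    set v₀ : Pt := γ t₂ i₀ - γ t₂ j₀ with hv₀
    set v₁ : Pt := γ t₁ p₁.1.1 - γ t₁ p₁.1.2 with hv₁
    have hR₀ : (0:ℝ) < ‖v₀‖ := norm_pos_iff.2 (sub_ne_zero.2 (hcf₂ _ _ hij₀))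
    have hR₁ : (0:ℝ) < ‖v₁‖ := norm_pos_iff.2 (sub_ne_zero.2 (hcf₁ _ _ p₁.2))
    have hn₀ : ‖v₀‖^2 = (v₀ 0)^2 + (v₀ 1)^2 := pt_norm_sq v₀
    have hn₁ : ‖v₁‖^2 = (v₁ 0)^2 + (v₁ 1)^2 := pt_norm_sq v₁
    have hch : (v₀ 1)^2 * (v₁ 0)^2 ≤ (v₁ 1)^2 * (v₀ 0)^2 := by
      simp only [hf] at hchain
      have hx1 : (0:ℝ) < (v₀ 0)^2 := by have := hfact₀.2; positivity
      have hx2 : (0:ℝ) < (v₁ 0)^2 := by have := hfact₁.2; positivity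
      exact (div_le_div_iff₀ hx1 hx2).mp hchain
    have hcos : |v₁ 0| / ‖v₁‖ ≤ |v₀ 0| / ‖v₀‖ := by
      apply le_of_sq_le_sq'' (by positivity) (by positivity)
      rw [div_pow, div_pow, sq_abs, sq_abs, div_le_div_iff₀ (by positivity) (by positivity)]
      nlinarith [hn₀, hn₁, hch, sq_nonneg (v₀ 0), sq_nonneg (v₁ 0)]
    calc thetaFn n (γ t₂) = Real.arccos (|v₀ 0| / ‖v₀‖) := hth₀
      _ ≤ Real.arccos (|v₁ 0| / ‖v₁‖) := arccos_anti hcos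
      _ ≤ thetaFn n (γ t₁) := theta_le_pair (γ t₁) p₁.2
end
end

section
/- Fix an integer n ≥ 2, masses m₁,…,mₙ > 0, and s > 1. A configuration q ∈ (ℝ²)ⁿ with all bodies on the x-axis ℝ×{0} is an s-CSBC (a normalized S-balanced configuration with parameter s) if and only if √s·q is a normalized collinear central configuration on the x-axis, i.e. (√s·q) is collision-free and centered with ⟨√s·q, √s·q⟩_M = 1 and ∇_{qᵢ}U(√s·q) + U(√s·q)·mᵢ·√s·qᵢ = 0 for all i. -/
open scoped BigOperators

noncomputable section

/- ============ auxiliary lemmas ============ -/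

lemma diff_aux1 (a : ℝ) (b : Pt) (x : Pt) (hx : x ≠ b) :
    DifferentiableAt ℝ (fun y : Pt => a / ‖y - b‖) x := by
  have h1 : DifferentiableAt ℝ (fun y : Pt => ‖y - b‖) x :=
    (differentiableAt_id.sub_const b).norm ℝ (sub_ne_zero.mpr hx)
  have h2 : ‖x - b‖ ≠ 0 := by simpa [norm_eq_zero, sub_ne_zero] using hx
  simp only [div_eq_mul_inv]
  exact (h1.inv h2).const_mul a

lemma diff_aux2 (a : ℝ) (b : Pt) (x : Pt) (hx : b ≠ x) :
    DifferentiableAt ℝ (fun y : Pt => a / ‖b - y‖) x := by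
  have h1 : DifferentiableAt ℝ (fun y : Pt => ‖b - y‖) x :=
    ((differentiableAt_const b).sub differentiableAt_id).norm ℝ (sub_ne_zero.mpr hx)
  have h2 : ‖b - x‖ ≠ 0 := by simpa [norm_eq_zero, sub_ne_zero] using hx
  simp only [div_eq_mul_inv]
  exact (h1.inv h2).const_mul a

lemma diff_pot (n : ℕ) (m : Fin n → ℝ) (q : Conf n) (hq : CollisionFree n q) (i : Fin n) :
    DifferentiableAt ℝ (fun x => potU n m (Function.update q i x)) (q i) := by
  unfold potU
  apply DifferentiableAt.fun_sum
  intro j _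
  apply DifferentiableAt.fun_sum
  intro k _
  by_cases hjk : j < k
  · simp only [if_pos hjk]
    have hne : j ≠ k := hjk.ne
    by_cases hji : j = i
    · subst hji
      have hki : k ≠ j := hne.symm
      have : (fun x : Pt => m j * m k / ‖Function.update q j x j - Function.update q j x k‖)
          = fun x => m j * m k / ‖x - q k‖ := by
        funext x
        rw [Function.update_self, Function.update_of_ne hki]
      rw [this]
      exact diff_aux1 _ _ _ (hq j k hne)
    · by_cases hki : k = i
      · subst hki
        have : (fun x : Pt => m j * m k / ‖Function.update q k x j - Function.update q k x k‖)
            = fun x => m j * m k / ‖q j - x‖ := by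
          funext x
          rw [Function.update_self, Function.update_of_ne hji]
        rw [this]
        exact diff_aux2 _ _ _ (hq j k hne)
      · have : (fun x : Pt => m j * m k / ‖Function.update q i x j - Function.update q i x k‖)
            = fun _ => m j * m k / ‖q j - q k‖ := by
          funext x
          rw [Function.update_of_ne hji, Function.update_of_ne hki]
        rw [this]
        exact differentiableAt_const _
  · simp only [if_neg hjk]
    exact differentiableAt_const _

lemma grad_scale (f : Pt → ℝ) (a : Pt) (c : ℝ) (hc : c ≠ 0) (hf : DifferentiableAt ℝ f a) :
    gradient (fun y => c⁻¹ • f (c⁻¹ • y)) (c • a) = (c⁻¹ * c⁻¹) • gradient f a := by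
  have hg : HasGradientAt f (gradient f a) a := hf.hasGradientAt
  have hF : HasFDerivAt f (InnerProductSpace.toDual ℝ Pt (gradient f a)) a :=
    hg.hasFDerivAt
  have hlin : HasFDerivAt (fun y : Pt => c⁻¹ • y) (c⁻¹ • ContinuousLinearMap.id ℝ Pt) (c • a) :=
    ((c⁻¹ • ContinuousLinearMap.id ℝ Pt).hasFDerivAt)
  have hca : c⁻¹ • (c • a) = a := by rw [smul_smul, inv_mul_cancel₀ hc, one_smul]
  have hcomp : HasFDerivAt (fun y => f (c⁻¹ • y))
      ((InnerProductSpace.toDual ℝ Pt (gradient f a)).comp (c⁻¹ • ContinuousLinearMap.id ℝ Pt))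
      (c • a) := by
    have := HasFDerivAt.comp (c • a) (by rwa [hca]) hlin
    exact this
  have hsm := hcomp.const_smul c⁻¹
  have heq : (c⁻¹ • ((InnerProductSpace.toDual ℝ Pt (gradient f a)).comp
      (c⁻¹ • ContinuousLinearMap.id ℝ Pt))) =
      InnerProductSpace.toDual ℝ Pt ((c⁻¹ * c⁻¹) • gradient f a) := by
    ext v
    simp [real_inner_smul_left, real_inner_smul_right, mul_comm, mul_assoc]
  rw [heq] at hsm
  exact (hasGradientAt_iff_hasFDerivAt.mpr hsm).gradient

lemma potU_smul (n : ℕ) (m : Fin n → ℝ) (q : Conf n) (c : ℝ) (hc : 0 < c) :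
    potU n m (c • q) = c⁻¹ * potU n m q := by
  unfold potU
  rw [Finset.mul_sum]
  refine Finset.sum_congr rfl fun i _ => ?_
  rw [Finset.mul_sum]
  refine Finset.sum_congr rfl fun j _ => ?_
  by_cases h : i < j
  · simp only [if_pos h, Pi.smul_apply]
    rw [← smul_sub, norm_smul, Real.norm_eq_abs, abs_of_pos hc,
      ← div_div, div_eq_inv_mul (m i * m j) c, mul_div_assoc]
  · simp [h]

lemma gradU_smul (n : ℕ) (m : Fin n → ℝ) (q : Conf n) (hq : CollisionFree n q)
    (c : ℝ) (hc : 0 < c) (i : Fin n) :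
    gradU n m (c • q) i = (c⁻¹ * c⁻¹) • gradU n m q i := by
  have hc0 : c ≠ 0 := ne_of_gt hc
  have hfun : (fun x => potU n m (Function.update (c • q) i x))
      = fun x => c⁻¹ • potU n m (Function.update q i (c⁻¹ • x)) := by
    funext x
    have hupd : Function.update (c • q) i x = c • Function.update q i (c⁻¹ • x) := by
      funext j
      by_cases hj : j = i
      · subst hj
        simp [smul_smul, mul_inv_cancel₀ hc0]
      · simp [Function.update_of_ne hj]
    rw [hupd, potU_smul n m _ c hc, smul_eq_mul]
  have hpt : (c • q) i = c • q i := rfl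
  unfold gradU
  rw [hfun, hpt]
  exact grad_scale (fun x => potU n m (Function.update q i x)) (q i) c hc0
    (diff_pot n m q hq i)

/-- A configuration on the x-axis is an s-CSBC if and only if `√s·q` is a normalized
collinear central configuration on the x-axis. -/
theorem stmt14 (n : ℕ) (hn : 2 ≤ n) (m : Fin n → ℝ) (hm : ∀ i, 0 < m i)
    (s : ℝ) (hs : 1 < s) (q : Conf n) (hline : ∀ i, q i 1 = 0) :
    IsSBC n m s q ↔
      (CollisionFree n (Real.sqrt s • q) ∧ Centered n m (Real.sqrt s • q) ∧
        (∀ i, (Real.sqrt s • q) i 1 = 0) ∧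
        mInner n m (Real.sqrt s • q) (Real.sqrt s • q) = 1 ∧
        ∀ i, gradU n m (Real.sqrt s • q) i +
          potU n m (Real.sqrt s • q) • (m i • (Real.sqrt s • q) i) = 0) := by
  have hs0 : (0 : ℝ) < s := lt_trans one_pos hs
  set c := Real.sqrt s with hc_def
  have hc : 0 < c := Real.sqrt_pos.mpr hs0
  have hc0 : c ≠ 0 := ne_of_gt hc
  have hcc : c * c = s := Real.mul_self_sqrt hs0.le
  -- Smat on the axis
  have hSmat : ∀ i, Smat s (q i) = s • q i := by
    intro i
    ext k
    fin_cases k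
    · simp [Smat]
    · simp [Smat, hline i]
  -- collision-free equivalence
  have hcf : CollisionFree n q ↔ CollisionFree n (c • q) := by
    constructor
    · intro h i j hij hEq
      exact h i j hij (smul_right_injective Pt hc0 hEq)
    · intro h i j hij hEq
      exact h i j hij (by simp [Pi.smul_apply, hEq])
  -- centered equivalence
  have hsum : (∑ i, m i • (c • q) i) = c • ∑ i, m i • q i := by
    rw [Finset.smul_sum]
    exact Finset.sum_congr rfl fun i _ => by rw [Pi.smul_apply, smul_comm]
  have hcent : Centered n m q ↔ Centered n m (c • q) := by
    unfold Centered
    rw [hsum, smul_eq_zero]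
    simp [hc0]
  -- moment of inertia
  have hmom : Imom n m s q = mInner n m (c • q) (c • q) := by
    unfold Imom mInner Shat
    refine Finset.sum_congr rfl fun i _ => ?_
    rw [hSmat i, Pi.smul_apply, real_inner_smul_left, real_inner_smul_left,
      real_inner_smul_right]
    rw [← hcc]
    ring
  -- line condition for c • q
  have hline' : ∀ i, (c • q) i 1 = 0 := by
    intro i
    simp [Pi.smul_apply, PiLp.smul_apply, hline i]
  -- main equation equivalence (needs collision-freeness of q)
  have key : CollisionFree n q →
      ∀ i, gradU n m (c • q) i + potU n m (c • q) • (m i • (c • q) i)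
        = (c⁻¹ * c⁻¹) • (gradU n m q i + potU n m q • (m i • Smat s (q i))) := by
    intro hq i
    rw [gradU_smul n m q hq c hc i, potU_smul n m q c hc, hSmat i]
    have hpt : (c • q) i = c • q i := rfl
    rw [hpt, smul_add, smul_smul, smul_smul, smul_smul, smul_smul, smul_smul]
    congr 2
    rw [← hcc]
    field_simp
  constructor
  · rintro ⟨hq, hcen, hI, heq⟩
    refine ⟨hcf.mp hq, hcent.mp hcen, hline', by rw [← hmom]; exact hI, ?_⟩
    intro i
    rw [key hq i, heq i, smul_zero]
  · rintro ⟨hq', hcen', _, hI', heq'⟩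
    have hq : CollisionFree n q := hcf.mpr hq'
    refine ⟨hq, hcent.mpr hcen', by rw [hmom]; exact hI', ?_⟩
    intro i
    have h0 := heq' i
    rw [key hq i] at h0
    rcases smul_eq_zero.mp h0 with h | h
    · exact absurd h (by positivity)
    · exact h
end
end
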